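/- For any complex sequence x in the domain D (i.e. ∑_{k≥1}|x_k x_{k+1}| < ∞), the function 𝔉 satisfies the recurrence 𝔉({x_k}_{k=1}^{∞}) = 𝔉({x_k}_{k=2}^{∞}) − x_1 x_2 · 𝔉({x_k}_{k=3}^{∞}). -/

import Mathlib

open Classical

noncomputable def Fterm (x : ℕ → ℂ) (m : ℕ) (k : Fin m → ℕ) : ℂ :=
  if ∀ i : Fin m, ∀ h : (i : ℕ) + 1 < m, k i + 2 ≤ k ⟨(i : ℕ) + 1, h⟩ then
    ∏ i : Fin m, x (k i) * x (k i + 1)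
  else 0

/-- The function 𝔉 applied to the sequence (x 0, x 1, x 2, …), i.e. x is 0-based:
`x k` represents `x_{k+1}` of the paper. -/
noncomputable def FF (x : ℕ → ℂ) : ℂ :=
  1 + ∑' m : ℕ, (-1 : ℂ) ^ (m + 1) * (∑' k : Fin (m + 1) → ℕ, Fterm x (m + 1) k)

/-- 𝔉 of the finite tuple (x 0, …, x (n-1)), by extending with zeros. -/
noncomputable def FFfin (n : ℕ) (x : ℕ → ℂ) : ℂ :=
  FF fun k => if k < n then x k else 0

open Function Finset ENNReal NNReal Nat

section Aux

/-- Admissibility predicate: indices increase with gaps ≥ 2. -/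
abbrev Adm (m : ℕ) (k : Fin m → ℕ) : Prop :=
  ∀ i : Fin m, ∀ h : (i : ℕ) + 1 < m, k i + 2 ≤ k ⟨(i : ℕ) + 1, h⟩

lemma Fterm_eq (x : ℕ → ℂ) (m : ℕ) (k : Fin m → ℕ) :
    Fterm x m k = if Adm m k then ∏ i : Fin m, x (k i) * x (k i + 1) else 0 := rfl

lemma Adm.chain {m : ℕ} {k : Fin m → ℕ} (h : Adm m k) (d : ℕ) :
    ∀ (i : ℕ) (hd : i + d + 1 < m), k ⟨i, by omega⟩ + 2 ≤ k ⟨i + d + 1, hd⟩ := by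
  induction d with
  | zero => intro i hd; exact h ⟨i, by omega⟩ hd
  | succ n ih =>
    intro i hd
    have h1 : i + n + 1 < m := by omega
    have t1 := ih i h1
    have t2 := h ⟨i + n + 1, h1⟩ (show i + n + 1 + 1 < m by omega)
    have e : (⟨i + n + 1 + 1, show i + n + 1 + 1 < m by omega⟩ : Fin m)
        = ⟨i + (n + 1) + 1, hd⟩ := by apply Fin.ext; simp; omega
    rw [e] at t2
    omega

lemma Adm.lt {m : ℕ} {k : Fin m → ℕ} (h : Adm m k) {i j : Fin m}
    (hij : (i : ℕ) < (j : ℕ)) : k i + 2 ≤ k j := by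
  obtain ⟨iv, hi⟩ := i; obtain ⟨jv, hj⟩ := j
  simp only [] at hij
  have := Adm.chain h (jv - iv - 1) iv (by omega)
  have e : (⟨iv + (jv - iv - 1) + 1, by omega⟩ : Fin m) = ⟨jv, hj⟩ := by
    apply Fin.ext; simp; omega
  rwa [e] at this

lemma Adm.strictMono {m : ℕ} {k : Fin m → ℕ} (h : Adm m k) : StrictMono k := by
  intro i j hij
  have := h.lt (i := i) (j := j) hij
  omega

lemma S_zero (y : ℕ → ℂ) : ∑' k : Fin 0 → ℕ, Fterm y 0 k = 1 := by
  have h : ∀ k : Fin 0 → ℕ, Fterm y 0 k = 1 := by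
    intro k
    have hA : Adm 0 k := fun i => i.elim0
    rw [Fterm_eq, if_pos hA]
    simp
  rw [tsum_congr h]
  exact tsum_eq_single default (fun b hb => absurd (Subsingleton.elim b default) hb)

lemma ennreal_pi_tsum (e : ℕ → ℝ≥0∞) :
    ∀ m : ℕ, ∑' k : Fin m → ℕ, ∏ i : Fin m, e (k i) = (∑' n, e n) ^ m := by
  intro m
  induction m with
  | zero =>
    rw [pow_zero,
      show (fun k : Fin 0 → ℕ => ∏ i : Fin 0, e (k i)) = fun _ => 1 by funext k; simp]
    exact tsum_eq_single default (fun b hb => absurd (Subsingleton.elim b default) hb)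
  | succ n ih =>
    rw [← (Fin.consEquiv (fun _ : Fin (n + 1) => ℕ)).tsum_eq]
    have : ∀ p : ℕ × (Fin n → ℕ),
        (∏ i : Fin (n + 1), e ((Fin.consEquiv (fun _ : Fin (n+1) => ℕ)) p i))
          = e p.1 * ∏ i : Fin n, e (p.2 i) := by
      intro p
      simp [Fin.consEquiv, Fin.prod_univ_succ]
    rw [tsum_congr this, ENNReal.tsum_prod']
    calc ∑' (a : ℕ) (t : Fin n → ℕ), e a * ∏ i : Fin n, e (t i)
        = ∑' (a : ℕ), e a * ∑' t : Fin n → ℕ, ∏ i : Fin n, e (t i) := by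
          congr 1; funext a; exact ENNReal.tsum_mul_left
      _ = (∑' n, e n) ^ (n + 1) := by
          rw [ih, ENNReal.tsum_mul_right, pow_succ, mul_comm ((∑' n, e n) ^ n)]

lemma ennreal_adm_bound (e : ℕ → ℝ≥0∞) (m : ℕ) :
    (m ! : ℝ≥0∞) * ∑' k : Fin m → ℕ, (if Adm m k then ∏ i : Fin m, e (k i) else 0)
      ≤ (∑' n, e n) ^ m := by
  haveI : WellFoundedLT (Fin m) := inferInstance
  have hsub : ∑' k : Fin m → ℕ, (if Adm m k then ∏ i : Fin m, e (k i) else 0)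
      = ∑' k : ↥{k : Fin m → ℕ | Adm m k}, ∏ i : Fin m, e (k.1 i) := by
    rw [tsum_subtype {k : Fin m → ℕ | Adm m k} (fun k => ∏ i : Fin m, e (k i))]
    exact tsum_congr fun k => by simp [Set.indicator_apply]
  rw [hsub]
  set j : Equiv.Perm (Fin m) × ↥{k : Fin m → ℕ | Adm m k} → (Fin m → ℕ) :=
    fun p => p.2.1 ∘ p.1 with hjdef
  have hj : Function.Injective j := by
    rintro ⟨σ, k, hk⟩ ⟨σ', k', hk'⟩ hEq
    simp only [hjdef] at hEq
    have hk2 : Adm m k := hk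
    have hk2' : Adm m k' := hk'
    have hmk : StrictMono k := Adm.strictMono hk2
    have hmk' : StrictMono k' := Adm.strictMono hk2'
    have hr : Set.range k = Set.range k' := by
      rw [← σ.surjective.range_comp k, ← σ'.surjective.range_comp k', hEq]
    have hkk' : k = k' := (hmk.range_inj hmk').1 hr
    subst hkk'
    have hσ : σ = σ' := by
      ext i
      have h1 := congrFun hEq i
      simp only [Function.comp_apply] at h1
      exact congrArg Fin.val (hmk.injective h1)
    simp [hσ]
  have key := ENNReal.tsum_comp_le_tsum_of_injective hj
    (fun k : Fin m → ℕ => ∏ i : Fin m, e (k i))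
  rw [ennreal_pi_tsum e m] at key
  refine le_trans (le_of_eq ?_) key
  have hcomp : ∀ p : Equiv.Perm (Fin m) × ↥{k : Fin m → ℕ | Adm m k},
      (∏ i : Fin m, e (j p i)) = ∏ i : Fin m, e (p.2.1 i) := by
    intro p
    exact Equiv.prod_comp p.1 (fun i => e (p.2.1 i))
  calc (m ! : ℝ≥0∞) * ∑' k : ↥{k : Fin m → ℕ | Adm m k}, ∏ i : Fin m, e (k.1 i)
      = ∑' (_ : Equiv.Perm (Fin m)) (k : ↥{k : Fin m → ℕ | Adm m k}),
          ∏ i : Fin m, e (k.1 i) := by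
        rw [tsum_fintype (fun _ : Equiv.Perm (Fin m) =>
          ∑' k : ↥{k : Fin m → ℕ | Adm m k}, ∏ i : Fin m, e (k.1 i))]
        rw [Finset.sum_const, nsmul_eq_mul]
        congr 2
        simp [Fintype.card_perm]
    _ = ∑' p : Equiv.Perm (Fin m) × ↥{k : Fin m → ℕ | Adm m k},
          ∏ i : Fin m, e (j p i) := by
        rw [ENNReal.tsum_prod']
        exact tsum_congr fun σ => tsum_congr fun k => (hcomp (σ, k)).symm

lemma Fterm_nnnorm (y : ℕ → ℂ) (m : ℕ) (k : Fin m → ℕ) :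
    (‖Fterm y m k‖₊ : ℝ≥0∞)
      = if Adm m k then ∏ i : Fin m, (‖y (k i) * y (k i + 1)‖₊ : ℝ≥0∞) else 0 := by
  rw [Fterm_eq]
  split_ifs with h
  · rw [nnnorm_prod, ENNReal.coe_finset_prod]
  · simp

lemma tsum_nnnorm_Fterm_le (y : ℕ → ℂ) (m : ℕ) :
    ∑' k : Fin m → ℕ, (‖Fterm y m k‖₊ : ℝ≥0∞)
      ≤ (∑' n, (‖y n * y (n + 1)‖₊ : ℝ≥0∞)) ^ m / (m ! : ℝ≥0∞) := by
  rw [ENNReal.le_div_iff_mul_le (Or.inl (by exact_mod_cast Nat.factorial_ne_zero m))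
    (Or.inl (by simp))]
  rw [mul_comm]
  have := ennreal_adm_bound (fun n => (‖y n * y (n + 1)‖₊ : ℝ≥0∞)) m
  calc (m ! : ℝ≥0∞) * ∑' k : Fin m → ℕ, (‖Fterm y m k‖₊ : ℝ≥0∞)
      = (m ! : ℝ≥0∞) * ∑' k : Fin m → ℕ,
          (if Adm m k then ∏ i : Fin m, (‖y (k i) * y (k i + 1)‖₊ : ℝ≥0∞) else 0) := by
        congr 1; exact tsum_congr (Fterm_nnnorm y m)
    _ ≤ _ := this

section SummableSection

variable {y : ℕ → ℂ} (hy : Summable fun n => ‖y n * y (n + 1)‖)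

lemma tsumC_ne_top (hy : Summable fun n => ‖y n * y (n + 1)‖) :
    (∑' n, (‖y n * y (n + 1)‖₊ : ℝ≥0∞)) ≠ ∞ := by
  rw [ENNReal.tsum_coe_ne_top_iff_summable]
  rw [← NNReal.summable_coe]
  simpa [coe_nnnorm] using hy

lemma summable_norm_Fterm (hy : Summable fun n => ‖y n * y (n + 1)‖) (m : ℕ) :
    Summable fun k : Fin m → ℕ => ‖Fterm y m k‖ := by
  have hfin : ∑' k : Fin m → ℕ, (‖Fterm y m k‖₊ : ℝ≥0∞) ≠ ∞ := by
    refine ne_top_of_le_ne_top ?_ (tsum_nnnorm_Fterm_le y m)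
    exact (ENNReal.div_lt_top (pow_ne_top (tsumC_ne_top hy)) (by exact_mod_cast Nat.factorial_ne_zero m)).ne
  have := ENNReal.tsum_coe_ne_top_iff_summable.1 hfin
  rw [← NNReal.summable_coe] at this
  simpa [coe_nnnorm] using this

lemma summable_Fterm (hy : Summable fun n => ‖y n * y (n + 1)‖) (m : ℕ) :
    Summable (Fterm y m) :=
  (summable_norm_Fterm hy m).of_norm

lemma norm_S_le (hy : Summable fun n => ‖y n * y (n + 1)‖) (m : ℕ) :
    ‖∑' k : Fin m → ℕ, Fterm y m k‖
      ≤ (∑' n, ‖y n * y (n + 1)‖) ^ m / (m ! : ℝ) := by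
  have h1 : ‖∑' k : Fin m → ℕ, Fterm y m k‖ ≤ ∑' k : Fin m → ℕ, ‖Fterm y m k‖ :=
    norm_tsum_le_tsum_norm (summable_norm_Fterm hy m)
  refine h1.trans ?_
  have hnn : Summable fun k : Fin m → ℕ => ‖Fterm y m k‖₊ := by
    rw [← NNReal.summable_coe]
    simpa [coe_nnnorm] using summable_norm_Fterm hy m
  have hc : Summable fun n => ‖y n * y (n + 1)‖₊ := by
    rw [← NNReal.summable_coe]
    simpa [coe_nnnorm] using hy
  have hle := tsum_nnnorm_Fterm_le y m
  rw [← ENNReal.coe_tsum hnn, ← ENNReal.coe_tsum hc] at hle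
  have hRHS : ((↑(∑' n, ‖y n * y (n + 1)‖₊) : ℝ≥0∞) ^ m / (m ! : ℝ≥0∞)) ≠ ∞ :=
    (ENNReal.div_lt_top (pow_ne_top ENNReal.coe_ne_top)
      (by exact_mod_cast Nat.factorial_ne_zero m)).ne
  have := ENNReal.toReal_mono hRHS hle
  rw [ENNReal.coe_toReal, ENNReal.toReal_div, ENNReal.toReal_pow, ENNReal.coe_toReal,
    ENNReal.toReal_natCast] at this
  calc ∑' k : Fin m → ℕ, ‖Fterm y m k‖
      = ((∑' k : Fin m → ℕ, ‖Fterm y m k‖₊ : ℝ≥0) : ℝ) := by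
        rw [NNReal.coe_tsum]; simp [coe_nnnorm]
    _ ≤ (((∑' n, ‖y n * y (n + 1)‖₊ : ℝ≥0) : ℝ)) ^ m / (m ! : ℝ) := this
    _ = (∑' n, ‖y n * y (n + 1)‖) ^ m / (m ! : ℝ) := by
        rw [NNReal.coe_tsum]; simp [coe_nnnorm]

end SummableSection

lemma cons_mk_succ {m : ℕ} (a : ℕ) (s : Fin m → ℕ) (i : ℕ) (h : i + 1 < m + 1) :
    Fin.cons (α := fun _ => ℕ) a s ⟨i + 1, h⟩ = s ⟨i, by omega⟩ := by
  have e : (⟨i + 1, h⟩ : Fin (m + 1)) = Fin.succ ⟨i, by omega⟩ := rfl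
  rw [e, Fin.cons_succ]

lemma S_split (x : ℕ → ℂ) (hx : Summable fun k => ‖x k * x (k + 1)‖) (m : ℕ) :
    ∑' k : Fin (m + 1) → ℕ, Fterm x (m + 1) k
      = (∑' k : Fin (m + 1) → ℕ, Fterm (fun n => x (n + 1)) (m + 1) k)
        + x 0 * x 1 * ∑' k : Fin m → ℕ, Fterm (fun n => x (n + 2)) m k := by
  set F0 : (Fin (m + 1) → ℕ) → ℂ :=
    fun k => if k 0 = 0 then Fterm x (m + 1) k else 0 with hF0
  set F1 : (Fin (m + 1) → ℕ) → ℂ :=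
    fun k => if k 0 = 0 then 0 else Fterm x (m + 1) k with hF1
  have hnorm : Summable fun k : Fin (m + 1) → ℕ => ‖Fterm x (m + 1) k‖ :=
    summable_norm_Fterm hx (m + 1)
  have h0 : Summable F0 := by
    refine Summable.of_norm_bounded hnorm fun k => ?_
    by_cases h : k 0 = 0 <;> simp [hF0, h]
  have h1 : Summable F1 := by
    refine Summable.of_norm_bounded hnorm fun k => ?_
    by_cases h : k 0 = 0 <;> simp [hF1, h]
  have hsplit : ∀ k, Fterm x (m + 1) k = F1 k + F0 k := by
    intro k
    by_cases h : k 0 = 0 <;> simp [hF0, hF1, h]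
  rw [tsum_congr hsplit, Summable.tsum_add h1 h0]
  congr 1
  · -- part F1
    set phi : (Fin (m + 1) → ℕ) → (Fin (m + 1) → ℕ) := fun k i => k i + 1 with hphidef
    have hphi : Function.Injective phi := by
      intro k k' hkk'
      funext i
      have := congrFun hkk' i
      simp only [hphidef] at this
      omega
    have hsupp : Function.support F1 ⊆ Set.range phi := by
      intro k hk
      simp only [Function.mem_support, hF1] at hk
      have hk0 : k 0 ≠ 0 := by
        intro h; rw [if_pos h] at hk; exact hk rfl
      rw [if_neg hk0] at hk
      have hadm : Adm (m + 1) k := by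
        by_contra hA
        rw [Fterm_eq, if_neg hA] at hk; exact hk rfl
      have hpos : ∀ i, 1 ≤ k i := by
        intro i
        rcases Nat.eq_zero_or_pos (i : ℕ) with h | h
        · have : i = 0 := Fin.ext (by simpa using h)
          rw [this]; omega
        · have := hadm.lt (i := 0) (j := i) (by simpa using h)
          omega
      refine ⟨fun i => k i - 1, ?_⟩
      funext i
      simp only [hphidef]
      have := hpos i
      omega
    rw [← hphi.tsum_eq hsupp]
    refine tsum_congr fun k => ?_
    have hne : phi k 0 ≠ 0 := by simp [hphidef]
    rw [hF1]
    simp only []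
    rw [if_neg hne]
    rw [Fterm_eq, Fterm_eq]
    have hadm : Adm (m + 1) (phi k) ↔ Adm (m + 1) k := by
      constructor <;> intro h i hi <;> have := h i hi <;>
        simp only [hphidef] at this ⊢ <;> omega
    rw [if_congr hadm rfl rfl]
  · -- part F0
    set psi : (Fin m → ℕ) → (Fin (m + 1) → ℕ) :=
      fun t => Fin.cons 0 (fun i => t i + 2) with hpsidef
    have hpsi : Function.Injective psi := by
      intro t t' htt'
      funext i
      have := congrFun htt' i.succ
      simp only [hpsidef, Fin.cons_succ] at this
      omega
    have hsupp : Function.support F0 ⊆ Set.range psi := by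
      intro k hk
      simp only [Function.mem_support, hF0] at hk
      by_cases hk0 : k 0 = 0
      swap
      · rw [if_neg hk0] at hk; exact absurd rfl hk
      rw [if_pos hk0] at hk
      have hadm : Adm (m + 1) k := by
        by_contra hA
        rw [Fterm_eq, if_neg hA] at hk; exact hk rfl
      have hge : ∀ j : Fin m, 2 ≤ k j.succ := by
        intro j
        have := hadm.lt (i := 0) (j := j.succ) (by simp)
        omega
      refine ⟨fun i => k i.succ - 2, ?_⟩
      funext i
      induction i using Fin.cases with
      | zero => simp [hpsidef, hk0.symm]
      | succ j =>
        simp only [hpsidef, Fin.cons_succ]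
        have := hge j
        omega
    rw [← _root_.tsum_mul_left, ← hpsi.tsum_eq hsupp]
    refine tsum_congr fun t => ?_
    have h00 : psi t 0 = 0 := by simp [hpsidef]
    rw [hF0]
    simp only []
    rw [if_pos h00]
    rw [Fterm_eq, Fterm_eq]
    have hadm : Adm (m + 1) (psi t) ↔ Adm m t := by
      constructor
      · intro h i hi
        have him : (i : ℕ) < m := by omega
        have h2 : ((Fin.succ ⟨(i : ℕ), him⟩ : Fin (m + 1)) : ℕ) + 1 < m + 1 := by
          simp only [Fin.val_succ]; omega
        have hstep := h (Fin.succ ⟨(i : ℕ), him⟩) h2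
        have e : (⟨((Fin.succ ⟨(i : ℕ), him⟩ : Fin (m + 1)) : ℕ) + 1, h2⟩ : Fin (m + 1))
            = Fin.succ ⟨(i : ℕ) + 1, hi⟩ := by
          apply Fin.ext; simp only [Fin.val_succ, Fin.val_mk]
        rw [hpsidef] at hstep
        simp only [] at hstep
        rw [e, Fin.cons_succ, Fin.cons_succ] at hstep
        simp only [Fin.eta] at hstep
        omega
      · intro h i hi
        induction i using Fin.cases with
        | zero =>
          have h0m : (0 : ℕ) < m := by
            have := hi; simp only [Fin.val_zero] at this; omega
          have e : (⟨((0 : Fin (m + 1)) : ℕ) + 1, hi⟩ : Fin (m + 1))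
              = Fin.succ ⟨0, h0m⟩ := by
            apply Fin.ext; simp only [Fin.val_succ, Fin.val_mk, Fin.val_zero]
          rw [hpsidef]
          simp only []
          rw [e, Fin.cons_succ, Fin.cons_zero]
          omega
        | succ j =>
          have hj1 : (j : ℕ) + 1 < m := by
            have := hi; simp only [Fin.val_succ] at this; omega
          have hstep := h j hj1
          have e : (⟨((Fin.succ j : Fin (m + 1)) : ℕ) + 1, hi⟩ : Fin (m + 1))
              = Fin.succ ⟨(j : ℕ) + 1, hj1⟩ := by
            apply Fin.ext; simp only [Fin.val_succ, Fin.val_mk]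
          rw [hpsidef]
          simp only []
          rw [e, Fin.cons_succ, Fin.cons_succ]
          omega
    rw [if_congr hadm rfl rfl]
    by_cases hA : Adm m t
    · rw [if_pos hA, if_pos hA]
      rw [Fin.prod_univ_succ]
      simp only [hpsidef, Fin.cons_zero, Fin.cons_succ]
    · rw [if_neg hA, if_neg hA, mul_zero]

lemma summable_Sterm {y : ℕ → ℂ} (hy : Summable fun n => ‖y n * y (n + 1)‖) :
    Summable fun m : ℕ => (-1 : ℂ) ^ (m + 1) * ∑' k : Fin (m + 1) → ℕ, Fterm y (m + 1) k := by
  refine Summable.of_norm_bounded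
    (g := fun m => (∑' n, ‖y n * y (n + 1)‖) ^ (m + 1) / ((m + 1)! : ℝ)) ?_ ?_
  · exact (_root_.summable_nat_add_iff 1).2 (Real.summable_pow_div_factorial _)
  · intro m
    rw [norm_mul, norm_pow, norm_neg, norm_one, one_pow, one_mul]
    exact norm_S_le hy (m + 1)


end Aux

set_option maxHeartbeats 1000000 in
lemma FF_recurrence_aux (x : ℕ → ℂ) (hx : Summable fun k => ‖x k * x (k + 1)‖) :
    FF x = FF (fun k => x (k + 1)) - x 0 * x 1 * FF (fun k => x (k + 2)) := by
  have hx1 : Summable fun k => ‖x (k + 1) * x (k + 1 + 1)‖ :=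
    (_root_.summable_nat_add_iff (f := fun k => ‖x k * x (k + 1)‖) 1).2 hx
  have hx2 : Summable fun k => ‖x (k + 2) * x (k + 2 + 1)‖ :=
    (_root_.summable_nat_add_iff (f := fun k => ‖x k * x (k + 1)‖) 2).2 hx
  have hs1 : Summable fun m : ℕ => (-1 : ℂ) ^ (m + 1) *
      ∑' k : Fin (m + 1) → ℕ, Fterm (fun n => x (n + 1)) (m + 1) k :=
    summable_Sterm (y := fun n => x (n + 1)) hx1
  have hs2 : Summable fun m : ℕ => (-1 : ℂ) ^ (m + 1) *
      (x 0 * x 1 * ∑' k : Fin m → ℕ, Fterm (fun n => x (n + 2)) m k) := by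
    refine Summable.of_norm_bounded
      (g := fun m => ‖x 0 * x 1‖ * ((∑' n, ‖x (n + 2) * x (n + 2 + 1)‖) ^ m / (m ! : ℝ))) ?_ ?_
    · exact ((Real.summable_pow_div_factorial _).mul_left _)
    · intro m
      rw [norm_mul, norm_mul, norm_pow, norm_neg, norm_one, one_pow, one_mul]
      exact mul_le_mul_of_nonneg_left
        (norm_S_le (y := fun n => x (n + 2)) hx2 m) (norm_nonneg _)
  have hcongr : (fun m : ℕ => (-1 : ℂ) ^ (m + 1) *
        (∑' k : Fin (m + 1) → ℕ, Fterm x (m + 1) k))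
      = fun m : ℕ => (-1 : ℂ) ^ (m + 1) *
          ∑' k : Fin (m + 1) → ℕ, Fterm (fun n => x (n + 1)) (m + 1) k
        + (-1 : ℂ) ^ (m + 1) *
          (x 0 * x 1 * ∑' k : Fin m → ℕ, Fterm (fun n => x (n + 2)) m k) := by
    funext m
    rw [S_split x hx m]
    ring
  have e2 : ∑' m : ℕ, (-1 : ℂ) ^ (m + 1) *
        (x 0 * x 1 * ∑' k : Fin m → ℕ, Fterm (fun n => x (n + 2)) m k)
      = -(x 0 * x 1) - x 0 * x 1 * ∑' m : ℕ, (-1 : ℂ) ^ (m + 1) *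
          ∑' k : Fin (m + 1) → ℕ, Fterm (fun n => x (n + 2)) (m + 1) k := by
    rw [Summable.tsum_eq_zero_add hs2]
    have ht : ∑' m : ℕ, (-1 : ℂ) ^ (m + 1 + 1) *
          (x 0 * x 1 * ∑' k : Fin (m + 1) → ℕ, Fterm (fun n => x (n + 2)) (m + 1) k)
        = -(x 0 * x 1) * ∑' m : ℕ, ((-1 : ℂ) ^ (m + 1) *
            ∑' k : Fin (m + 1) → ℕ, Fterm (fun n => x (n + 2)) (m + 1) k) := by
      rw [← _root_.tsum_mul_left]
      exact tsum_congr fun m => by ring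
    rw [ht, S_zero]
    ring
  unfold FF
  rw [hcongr, Summable.tsum_add hs1 hs2, e2]
  ring

theorem FF_recurrence (x : ℕ → ℂ) (hx : Summable fun k => ‖x k * x (k + 1)‖) :
    FF x = FF (fun k => x (k + 1)) - x 0 * x 1 * FF (fun k => x (k + 2)) :=
  FF_recurrence_aux x hx
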